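/- Every tournament on n ≥ 3 vertices has at most (n³−n)/24 cyclic triangles, i.e., at most (n³−n)/24 three-element vertex subsets {x,y,z} with x→y→z→x. -/
import Mathlib


open Finset

/-- A tournament on `Fin n`: an orientation of the complete graph, i.e. no loops and
for all distinct `x, y` exactly one of `r x y`, `r y x` holds. -/
def IsTournament {n : ℕ} (r : Fin n → Fin n → Prop) : Prop :=
  (∀ x, ¬ r x x) ∧ ∀ x y : Fin n, x ≠ y → ((r x y ∧ ¬ r y x) ∨ (r y x ∧ ¬ r x y))

/-- `s` spans a cyclic triangle: `s = {x,y,z}` with `x→y→z→x`. -/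
def IsCyclicTriple {n : ℕ} (r : Fin n → Fin n → Prop) (s : Finset (Fin n)) : Prop :=
  ∃ x y z : Fin n, x ≠ y ∧ y ≠ z ∧ x ≠ z ∧ s = {x, y, z} ∧ r x y ∧ r y z ∧ r z x

/-- `s` spans a transitive triple. -/
def IsTransTriple {n : ℕ} (r : Fin n → Fin n → Prop) (s : Finset (Fin n)) : Prop :=
  ∃ x y z : Fin n, x ≠ y ∧ y ≠ z ∧ x ≠ z ∧ s = {x, y, z} ∧ r x y ∧ r y z ∧ r x z

/-- `s` contains a directed 4-cycle through all of its (four) elements. -/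
def HasCycle4 {n : ℕ} (r : Fin n → Fin n → Prop) (s : Finset (Fin n)) : Prop :=
  ∃ a b c d : Fin n, a ≠ b ∧ a ≠ c ∧ a ≠ d ∧ b ≠ c ∧ b ≠ d ∧ c ≠ d ∧
    s = {a, b, c, d} ∧ r a b ∧ r b c ∧ r c d ∧ r d a

/-- `s` spans a transitive 4-vertex subtournament. -/
def IsTrans4 {n : ℕ} (r : Fin n → Fin n → Prop) (s : Finset (Fin n)) : Prop :=
  ∃ a b c d : Fin n, a ≠ b ∧ a ≠ c ∧ a ≠ d ∧ b ≠ c ∧ b ≠ d ∧ c ≠ d ∧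
    s = {a, b, c, d} ∧ r a b ∧ r a c ∧ r a d ∧ r b c ∧ r b d ∧ r c d

open Classical in
/-- `C3(T)`: number of 3-element vertex subsets spanning a cyclic triangle. -/
noncomputable def cyc3Count {n : ℕ} (r : Fin n → Fin n → Prop) : ℕ :=
  ((univ.powersetCard 3).filter (fun s => IsCyclicTriple r s)).card

open Classical in
/-- `T3(T)`: number of 3-element vertex subsets spanning a transitive triple. -/
noncomputable def trans3Count {n : ℕ} (r : Fin n → Fin n → Prop) : ℕ :=
  ((univ.powersetCard 3).filter (fun s => IsTransTriple r s)).card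

open Classical in
/-- `C4(T)`: number of 4-element vertex subsets containing a directed 4-cycle. -/
noncomputable def cyc4Count {n : ℕ} (r : Fin n → Fin n → Prop) : ℕ :=
  ((univ.powersetCard 4).filter (fun s => HasCycle4 r s)).card

open Classical in
/-- `T4(T)`: number of 4-element vertex subsets spanning a transitive subtournament. -/
noncomputable def trans4Count {n : ℕ} (r : Fin n → Fin n → Prop) : ℕ :=
  ((univ.powersetCard 4).filter (fun s => IsTrans4 r s)).card

section Aux
open Classical

variable {n : ℕ} {r : Fin n → Fin n → Prop}

lemma tourn_asymm (hT : IsTournament r) {u v : Fin n} (h : r u v) : ¬ r v u := by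
  by_cases huv : u = v
  · subst huv; exact fun _ => hT.1 u h
  · rcases hT.2 u v huv with ⟨h1, h2⟩ | ⟨h1, h2⟩
    · exact h2
    · exact fun _ => h2 h

lemma tourn_ne (hT : IsTournament r) {u v : Fin n} (h : r u v) : u ≠ v := by
  rintro rfl; exact hT.1 u h

/-- Every 3-subset is cyclic or transitive. -/
lemma cyc_or_trans (hT : IsTournament r) {s : Finset (Fin n)} (hs : s.card = 3) :
    IsCyclicTriple r s ∨ IsTransTriple r s := by
  obtain ⟨a, b, c, hab, hac, hbc, rfl⟩ := Finset.card_eq_three.mp hs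
  rcases hT.2 a b hab with ⟨h1, -⟩ | ⟨h1, -⟩ <;>
    rcases hT.2 b c hbc with ⟨h2, -⟩ | ⟨h2, -⟩ <;>
    rcases hT.2 a c hac with ⟨h3, -⟩ | ⟨h3, -⟩
  · exact Or.inr ⟨a, b, c, hab, hbc, hac, rfl, h1, h2, h3⟩
  · exact Or.inl ⟨a, b, c, hab, hbc, hac, rfl, h1, h2, h3⟩
  · exact Or.inr ⟨a, c, b, hac, fun h => hbc h.symm, hab, by ext t; simp; tauto, h3, h2, h1⟩
  · exact Or.inr ⟨c, a, b, fun h => hac h.symm, hab, fun h => hbc h.symm,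
      by ext t; simp; tauto, h3, h1, h2⟩
  · exact Or.inr ⟨b, a, c, fun h => hab h.symm, hac, hbc, by ext t; simp; tauto, h1, h3, h2⟩
  · exact Or.inr ⟨b, c, a, hbc, fun h => hac h.symm, fun h => hab h.symm,
      by ext t; simp; tauto, h2, h3, h1⟩
  · exact Or.inl ⟨a, c, b, hac, fun h => hbc h.symm, hab, by ext t; simp; tauto, h3, h2, h1⟩
  · exact Or.inr ⟨c, b, a, fun h => hbc h.symm, fun h => hab h.symm, fun h => hac h.symm,
      by ext t; simp; tauto, h2, h1, h3⟩

lemma cyc_loses (hT : IsTournament r) {s : Finset (Fin n)} (h : IsCyclicTriple r s) :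
    ∀ v ∈ s, ∃ w ∈ s, r w v := by
  obtain ⟨x, y, z, -, -, -, rfl, hxy, hyz, hzx⟩ := h
  intro v hv
  simp only [mem_insert, mem_singleton] at hv
  rcases hv with rfl | rfl | rfl
  · exact ⟨_, by simp, hzx⟩
  · exact ⟨_, by simp, hxy⟩
  · exact ⟨_, by simp, hyz⟩

lemma not_cyc_and_trans (hT : IsTournament r) {s : Finset (Fin n)} :
    ¬ (IsCyclicTriple r s ∧ IsTransTriple r s) := by
  rintro ⟨hc, x, y, z, hxy, hyz, hxz, rfl, h1, h2, h3⟩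
  obtain ⟨w, hw, hwx⟩ := cyc_loses hT hc x (by simp)
  simp only [mem_insert, mem_singleton] at hw
  rcases hw with rfl | rfl | rfl
  · exact hT.1 w hwx
  · exact tourn_asymm hT h1 hwx
  · exact tourn_asymm hT h3 hwx

end Aux
section Aux2
open Classical

variable {n : ℕ} {r : Fin n → Fin n → Prop}

lemma cyc_fiber (hT : IsTournament r) {x y z : Fin n}
    (hxy : r x y) (hyz : r y z) (hzx : r z x) :
    ((univ : Finset (Fin n × Fin n × Fin n)).filter
      (fun p => (r p.1 p.2.1 ∧ r p.2.1 p.2.2) ∧ ({p.1, p.2.1, p.2.2} : Finset (Fin n)) = {x, y, z}))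
      = {(x,y,z),(y,z,x),(z,x,y)} := by
  have hyx := tourn_asymm hT hxy
  have hzy := tourn_asymm hT hyz
  have hxz := tourn_asymm hT hzx
  have hxx := hT.1 x; have hyy := hT.1 y; have hzz := hT.1 z
  ext ⟨a, b, c⟩
  simp only [mem_filter, mem_univ, true_and, mem_insert, mem_singleton, Prod.mk.injEq]
  constructor
  · rintro ⟨⟨h1, h2⟩, hs⟩
    have ha : a = x ∨ a = y ∨ a = z := by
      have : a ∈ ({x,y,z} : Finset (Fin n)) := by rw [← hs]; simp
      simpa using this
    have hb : b = x ∨ b = y ∨ b = z := by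
      have : b ∈ ({x,y,z} : Finset (Fin n)) := by rw [← hs]; simp
      simpa using this
    have hc : c = x ∨ c = y ∨ c = z := by
      have : c ∈ ({x,y,z} : Finset (Fin n)) := by rw [← hs]; simp
      simpa using this
    rcases ha with rfl | rfl | rfl <;> rcases hb with rfl | rfl | rfl <;>
      rcases hc with rfl | rfl | rfl <;> first | tauto | simp_all
  · rintro (⟨rfl, rfl, rfl⟩ | ⟨rfl, rfl, rfl⟩ | ⟨rfl, rfl, rfl⟩)
    · exact ⟨⟨hxy, hyz⟩, rfl⟩
    · exact ⟨⟨hyz, hzx⟩, by ext t; simp; tauto⟩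
    · exact ⟨⟨hzx, hxy⟩, by ext t; simp; tauto⟩

lemma cyc_fiber_card (hT : IsTournament r) {x y z : Fin n}
    (hxy : r x y) (hyz : r y z) (hzx : r z x) :
    ((univ : Finset (Fin n × Fin n × Fin n)).filter
      (fun p => (r p.1 p.2.1 ∧ r p.2.1 p.2.2) ∧ ({p.1, p.2.1, p.2.2} : Finset (Fin n)) = {x, y, z})).card
      = 3 := by
  have h1 := tourn_ne hT hxy
  have h2 := tourn_ne hT hyz
  have h3 := tourn_ne hT hzx
  rw [cyc_fiber hT hxy hyz hzx]
  rw [card_insert_of_notMem (by simp [Prod.ext_iff]; tauto),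
      card_insert_of_notMem (by simp [Prod.ext_iff]; tauto), card_singleton]

lemma trans_fiber_card (hT : IsTournament r) {x y z : Fin n}
    (hxy : r x y) (hyz : r y z) (hxz : r x z) :
    ((univ : Finset (Fin n × Fin n × Fin n)).filter
      (fun p => (r p.1 p.2.1 ∧ r p.2.1 p.2.2) ∧ ({p.1, p.2.1, p.2.2} : Finset (Fin n)) = {x, y, z})).card
      = 1 := by
  have hyx := tourn_asymm hT hxy
  have hzy := tourn_asymm hT hyz
  have hzx := tourn_asymm hT hxz
  have hxx := hT.1 x; have hyy := hT.1 y; have hzz := hT.1 z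
  have : ((univ : Finset (Fin n × Fin n × Fin n)).filter
      (fun p => (r p.1 p.2.1 ∧ r p.2.1 p.2.2) ∧ ({p.1, p.2.1, p.2.2} : Finset (Fin n)) = {x, y, z}))
      = {(x,y,z)} := by
    ext ⟨a, b, c⟩
    simp only [mem_filter, mem_univ, true_and, mem_singleton, Prod.mk.injEq]
    constructor
    · rintro ⟨⟨h1, h2⟩, hs⟩
      have ha : a = x ∨ a = y ∨ a = z := by
        have : a ∈ ({x,y,z} : Finset (Fin n)) := by rw [← hs]; simp
        simpa using this
      have hb : b = x ∨ b = y ∨ b = z := by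
        have : b ∈ ({x,y,z} : Finset (Fin n)) := by rw [← hs]; simp
        simpa using this
      have hc : c = x ∨ c = y ∨ c = z := by
        have : c ∈ ({x,y,z} : Finset (Fin n)) := by rw [← hs]; simp
        simpa using this
      rcases ha with rfl | rfl | rfl <;> rcases hb with rfl | rfl | rfl <;>
        rcases hc with rfl | rfl | rfl <;> first | tauto | simp_all
    · rintro ⟨rfl, rfl, rfl⟩
      exact ⟨⟨hxy, hyz⟩, rfl⟩
  rw [this, card_singleton]

lemma mid_fiber_card (y : Fin n) :
    ((univ : Finset (Fin n × Fin n × Fin n)).filter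
      (fun p => (r p.1 p.2.1 ∧ r p.2.1 p.2.2) ∧ p.2.1 = y)).card
    = (univ.filter fun u => r u y).card * (univ.filter fun u => r y u).card := by
  have h : ((univ : Finset (Fin n × Fin n × Fin n)).filter
      (fun p => (r p.1 p.2.1 ∧ r p.2.1 p.2.2) ∧ p.2.1 = y))
      = (univ.filter fun u => r u y) ×ˢ (({y} : Finset (Fin n)) ×ˢ (univ.filter fun u => r y u)) := by
    ext ⟨a, b, c⟩
    simp only [mem_filter, mem_univ, true_and, mem_product, mem_singleton]
    constructor
    · rintro ⟨⟨h1, h2⟩, rfl⟩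
      exact ⟨h1, rfl, h2⟩
    · rintro ⟨h1, rfl, h2⟩
      exact ⟨⟨h1, h2⟩, rfl⟩
  rw [h, card_product, card_product, card_singleton, one_mul]

end Aux2
section Aux3
open Classical

variable {n : ℕ} {r : Fin n → Fin n → Prop}

lemma deg_sum (hT : IsTournament r) (v : Fin n) :
    (univ.filter fun u => r u v).card + (univ.filter fun u => r v u).card = n - 1 := by
  classical
  have hdisj : Disjoint (univ.filter fun u => r u v) (univ.filter fun u => r v u) := by
    rw [Finset.disjoint_left]
    intro a ha hb
    simp only [mem_filter, mem_univ, true_and] at ha hb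
    exact tourn_asymm hT ha hb
  rw [← card_union_of_disjoint hdisj]
  have hu : (univ.filter fun u => r u v) ∪ (univ.filter fun u => r v u) = univ.erase v := by
    ext u
    simp only [mem_union, mem_filter, mem_univ, true_and, mem_erase, and_true]
    constructor
    · rintro (h | h)
      · exact tourn_ne hT h
      · exact (tourn_ne hT h).symm
    · intro h
      rcases hT.2 u v h with ⟨h1, -⟩ | ⟨h1, -⟩
      · exact Or.inl h1
      · exact Or.inr h1
  rw [hu, card_erase_of_mem (mem_univ v), card_univ, Fintype.card_fin]

lemma four_mul_le_sq {a b c : ℕ} (h : a + b = c) : 4 * (a * b) ≤ c ^ 2 := by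
  have h2 : 2 * a * b ≤ a ^ 2 + b ^ 2 := two_mul_le_add_sq a b
  subst h
  ring_nf
  ring_nf at h2
  nlinarith [h2]

end Aux3

theorem stmt_4 {n : ℕ} (hn : 3 ≤ n) (r : Fin n → Fin n → Prop) (hT : IsTournament r) :
    24 * cyc3Count r ≤ n ^ 3 - n := by
  classical
  set M := (univ : Finset (Fin n × Fin n × Fin n)).filter
    (fun p => r p.1 p.2.1 ∧ r p.2.1 p.2.2) with hM
  -- count by middle vertex
  have hA : M.card = ∑ y : Fin n,
      (univ.filter fun u => r u y).card * (univ.filter fun u => r y u).card := by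
    rw [card_eq_sum_card_fiberwise (f := fun p => p.2.1) (t := univ) (fun p _ => mem_univ _)]
    refine Finset.sum_congr rfl fun y _ => ?_
    rw [hM, filter_filter]
    exact mid_fiber_card y
  -- count by vertex set
  have hmem : ∀ p ∈ M, ({p.1, p.2.1, p.2.2} : Finset (Fin n)) ∈
      powersetCard 3 (univ : Finset (Fin n)) := by
    rintro ⟨a, b, c⟩ hp
    simp only [hM, mem_filter, mem_univ, true_and] at hp
    obtain ⟨h1, h2⟩ := hp
    have hab := tourn_ne hT h1
    have hbc := tourn_ne hT h2
    have hac : a ≠ c := by rintro rfl; exact tourn_asymm hT h1 h2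
    rw [mem_powersetCard]
    refine ⟨subset_univ _, ?_⟩
    rw [card_insert_of_notMem (by simp [hab, hac]),
        card_insert_of_notMem (by simp [hbc]), card_singleton]
  have hB : M.card = ∑ s ∈ powersetCard 3 (univ : Finset (Fin n)),
      (M.filter fun p => ({p.1, p.2.1, p.2.2} : Finset (Fin n)) = s).card :=
    card_eq_sum_card_fiberwise hmem
  have hft : (powersetCard 3 (univ : Finset (Fin n))).filter (fun s => ¬ IsCyclicTriple r s)
      = (powersetCard 3 (univ : Finset (Fin n))).filter (fun s => IsTransTriple r s) := by
    ext s
    simp only [mem_filter, and_congr_right_iff]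
    intro hs
    have hcard : s.card = 3 := (mem_powersetCard.mp hs).2
    constructor
    · intro h
      rcases cyc_or_trans hT hcard with h' | h'
      · exact absurd h' h
      · exact h'
    · intro h hc
      exact not_cyc_and_trans hT ⟨hc, h⟩
  have hsplit : (∑ s ∈ powersetCard 3 (univ : Finset (Fin n)),
      (M.filter fun p => ({p.1, p.2.1, p.2.2} : Finset (Fin n)) = s).card)
      = 3 * cyc3Count r + trans3Count r := by
    rw [← Finset.sum_filter_add_sum_filter_not (powersetCard 3 (univ : Finset (Fin n)))
      (fun s => IsCyclicTriple r s)]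
    congr 1
    · have hc : ∀ s ∈ (powersetCard 3 (univ : Finset (Fin n))).filter
          (fun s => IsCyclicTriple r s),
          (M.filter fun p => ({p.1, p.2.1, p.2.2} : Finset (Fin n)) = s).card = 3 := by
        intro s hs
        obtain ⟨x, y, z, -, -, -, rfl, hxy, hyz, hzx⟩ := (mem_filter.mp hs).2
        rw [hM, filter_filter]
        exact cyc_fiber_card hT hxy hyz hzx
      rw [Finset.sum_congr rfl hc, sum_const, smul_eq_mul, mul_comm]
      simp [cyc3Count]
    · rw [hft]
      have hc : ∀ s ∈ (powersetCard 3 (univ : Finset (Fin n))).filter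
          (fun s => IsTransTriple r s),
          (M.filter fun p => ({p.1, p.2.1, p.2.2} : Finset (Fin n)) = s).card = 1 := by
        intro s hs
        obtain ⟨x, y, z, -, -, -, rfl, hxy, hyz, hxz⟩ := (mem_filter.mp hs).2
        rw [hM, filter_filter]
        exact trans_fiber_card hT hxy hyz hxz
      rw [Finset.sum_congr rfl hc, sum_const, smul_eq_mul, mul_one]
      simp [trans3Count]
  have hcount : cyc3Count r + trans3Count r = Nat.choose n 3 := by
    have h1 := Finset.card_filter_add_card_filter_not
      (s := powersetCard 3 (univ : Finset (Fin n))) (p := fun s => IsCyclicTriple r s)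
    rw [hft] at h1
    rw [card_powersetCard, card_univ, Fintype.card_fin] at h1
    have e1 : cyc3Count r = ((powersetCard 3 (univ : Finset (Fin n))).filter
        (fun s => IsCyclicTriple r s)).card := by simp [cyc3Count]
    have e2 : trans3Count r = ((powersetCard 3 (univ : Finset (Fin n))).filter
        (fun s => IsTransTriple r s)).card := by simp [trans3Count]
    rw [e1, e2]
    exact h1
  have hsum : 12 * M.card ≤ 3 * (n * (n - 1) ^ 2) := by
    rw [hA, Finset.mul_sum]
    have hle : ∀ y : Fin n, 12 * ((univ.filter fun u => r u y).card *
        (univ.filter fun u => r y u).card) ≤ 3 * (n - 1) ^ 2 := by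
      intro y
      have h := four_mul_le_sq (deg_sum hT y)
      calc 12 * ((univ.filter fun u => r u y).card * (univ.filter fun u => r y u).card)
          = 3 * (4 * ((univ.filter fun u => r u y).card *
            (univ.filter fun u => r y u).card)) := by ring
        _ ≤ 3 * (n - 1) ^ 2 := Nat.mul_le_mul_left 3 h
    calc (∑ y : Fin n, 12 * ((univ.filter fun u => r u y).card *
          (univ.filter fun u => r y u).card))
        ≤ ∑ _y : Fin n, 3 * (n - 1) ^ 2 := Finset.sum_le_sum fun y _ => hle y
      _ = 3 * (n * (n - 1) ^ 2) := by
          rw [sum_const, card_univ, Fintype.card_fin, smul_eq_mul]; ring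
  have hch : 6 * Nat.choose n 3 = (n - 2) * ((n - 1) * n) := by
    have h := Nat.descFactorial_eq_factorial_mul_choose n 3
    rw [Nat.descFactorial_succ, Nat.descFactorial_succ, Nat.descFactorial_succ,
      Nat.descFactorial_zero] at h
    simpa [Nat.factorial, mul_comm, mul_assoc, mul_left_comm] using h.symm
  have hMc : M.card = 3 * cyc3Count r + trans3Count r := hB.trans hsplit
  have key : 24 * cyc3Count r + 12 * Nat.choose n 3 = 12 * M.card := by
    rw [hMc, ← hcount]; ring
  obtain ⟨k, rfl⟩ : ∃ k, n = k + 3 := ⟨n - 3, by omega⟩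
  have e1 : k + 3 - 1 = k + 2 := by omega
  have e2 : k + 3 - 2 = k + 1 := by omega
  rw [e1] at hsum
  rw [e1, e2] at hch
  have hgoal : 24 * cyc3Count r + (k + 3) ≤ (k + 3) ^ 3 := by nlinarith [key, hsum, hch]
  exact Nat.le_sub_of_add_le hgoal
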